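/- arXiv:0805.1411 — 3 statements merged into one kernel-verified Lean document; each statement's English description precedes it below -/
import Mathlib

section
/- The cochains τ_m are normalized (reduced): for 1 ≤ k ≤ n, τ_{2k}(a₀ ⊗ ⋯ ⊗ a_{2k}) = 0 whenever aⱼ is a constant polynomial for some index j with 1 ≤ j ≤ 2k; and τ_{2k−1}(a₀ ⊗ ⋯ ⊗ a_{2k−1}) = 0 whenever aⱼ is a constant polynomial for some index j with 0 ≤ j ≤ 2k−1. -/
open MeasureTheory

noncomputable section

/-- The polynomial Weyl algebra `𝕎 = ℝ[y¹,…,y^{2n}]` (underlying space). -/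
abbrev Weyl (n : ℕ) : Type := MvPolynomial (Fin (2*n)) ℝ

/-- Model for the tensor power `𝕎^{⊗N}`: polynomials in `N` groups of `2n` variables. -/
abbrev JointW (N n : ℕ) : Type := MvPolynomial (Fin N × Fin (2*n)) ℝ

/-- index of the canonical coordinate `p_s`. -/
def pCoord (n : ℕ) (s : Fin n) : Fin (2*n) := ⟨2*s.1, by have := s.2; omega⟩
/-- index of the canonical coordinate `q_s`. -/
def qCoord (n : ℕ) (s : Fin n) : Fin (2*n) := ⟨2*s.1+1, by have := s.2; omega⟩

/-- The Poisson bi-differential operator `α_{ij}` acting on the slots `i,j` of the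
tensor power `𝕎^{⊗N}`. -/
def alphaOp (n N : ℕ) (i j : Fin N) : Module.End ℝ (JointW N n) :=
  ∑ s : Fin n,
    ((MvPolynomial.pderiv (i, pCoord n s)).toLinearMap ∘ₗ
        (MvPolynomial.pderiv (j, qCoord n s)).toLinearMap
      - (MvPolynomial.pderiv (i, qCoord n s)).toLinearMap ∘ₗ
        (MvPolynomial.pderiv (j, pCoord n s)).toLinearMap)

/-- `e^{c·L} F`: the exponential series of the operator `L`, which terminates on each
polynomial `F` for the locally nilpotent operators used here. -/
def expOp {N n : ℕ} (c : ℝ) (L : Module.End ℝ (JointW N n)) (F : JointW N n) : JointW N n :=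
  ∑ k ∈ Finset.range (F.totalDegree + 1), (c ^ k / (Nat.factorial k : ℝ)) • (L ^ k) F

/-- `∏_{0 ≤ i < j ≤ N-1} e^{ℏ(u_i - u_j + 1/2) α_{ij}}` applied to `F` (the various
`α_{ij}` commute, so the order of application is irrelevant). -/
def prodExpAlpha (n N : ℕ) (h : ℝ) (u : Fin N → ℝ) (F : JointW N n) : JointW N n :=
  (List.finRange N).foldl (fun G i =>
    (List.finRange N).foldl (fun G' j =>
      if i < j then expOp (h * (u i - u j + 1/2)) (alphaOp n N i j) G' else G') G) F

/-- `(ℏα)^{∧k}` acting on the `2k` slots enumerated (in increasing order) by `slots`,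
written as a sum over all permutations; each perfect matching is counted `2^k·k!`
times with the correct sign, whence the normalizing factor. -/
def alphaWedge (n N : ℕ) (k : ℕ) (slots : Fin (2*k) → Fin N) (h : ℝ) (F : JointW N n) :
    JointW N n :=
  ((2^k * (Nat.factorial k) : ℝ))⁻¹ •
    ∑ σ : Equiv.Perm (Fin (2*k)),
      (((Equiv.Perm.sign σ : ℤˣ) : ℤ) : ℝ) • h^k •
        ((List.finRange k).foldl (fun G l =>
          alphaOp n N (slots (σ ⟨2*l.1, by have := l.2; omega⟩))
            (slots (σ ⟨2*l.1+1, by have := l.2; omega⟩)) G) F)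

/-- `a₀ ⊗ ⋯ ⊗ a_{N-1}` as an element of the joint algebra. -/
def tensorW {N n : ℕ} (a : Fin N → Weyl n) : JointW N n :=
  ∏ i, MvPolynomial.rename (fun v => (i, v)) (a i)

/-- `μ` : evaluation of all slots at `0`. -/
def evalZero {N n : ℕ} (F : JointW N n) : ℝ := MvPolynomial.eval (fun _ => 0) F

/-- The standard simplex `0 ≤ u₁ ≤ ⋯ ≤ u_m ≤ 1`. -/
def simplexSet (m : ℕ) : Set (Fin m → ℝ) :=
  {u | (∀ i, 0 ≤ u i ∧ u i ≤ 1) ∧ ∀ i j : Fin m, i ≤ j → u i ≤ u j}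

/-- extend `(u₁,…,u_m)` by `u₀ = 0`. -/
def uExt {m : ℕ} (u : Fin m → ℝ) : Fin (m+1) → ℝ := fun i => Fin.cases 0 u i

/-- The cochains `τ_m` on the polynomial Weyl algebra.  For even `m = 2k`,
`τ_{2k}(a) = (-1)^k ∫_{Δ^{2k}} μ(∏_{i<j} e^{ℏ(u_i-u_j+1/2)α_{ij}} π_{2k}(a)) du`, where
`π_{2k} = (ℏα)^{∧k}` acts on the slots `1,…,2k`;  for odd `m = 2k-1`,
`τ_{2k-1}(a) = (-1)^{k-1} ∫_{Δ^{2k-1}} μ(∏_{i<j} e^{ℏ(u_i-u_j+1/2)α_{ij}} (ℏα)^{∧k}(a)) du`,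
where `(ℏα)^{∧k}` acts on all `2k` slots `0,…,2k-1`. -/
def tau (n : ℕ) (h : ℝ) (m : ℕ) (a : Fin (m+1) → Weyl n) : ℝ :=
  if m % 2 = 0 then
    (-1 : ℝ)^(m/2) * ∫ u in simplexSet m, evalZero
      (prodExpAlpha n (m+1) h (uExt u)
        (alphaWedge n (m+1) (m/2) (fun i => ⟨i.1+1, by have := i.2; omega⟩) h (tensorW a)))
  else
    (-1 : ℝ)^((m+1)/2 - 1) * ∫ u in simplexSet m, evalZero
      (prodExpAlpha n (m+1) h (uExt u)
        (alphaWedge n (m+1) ((m+1)/2) (fun i => ⟨i.1, by have := i.2; omega⟩) h (tensorW a)))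

/-- The Moyal–Weyl star product `f ⋆ g = m(exp((ℏ/2)α)(f ⊗ g))`. -/
def moyal (n : ℕ) (h : ℝ) (f g : Weyl n) : Weyl n :=
  MvPolynomial.rename Prod.snd (expOp (h/2) (alphaOp n 2 0 1) (tensorW ![f, g]))

/-- the tuple `(a₀, …, aᵢ ⋆ aᵢ₊₁, …, a_{N+1})`. -/
def insStar (n : ℕ) (h : ℝ) {N : ℕ} (a : Fin (N+2) → Weyl n) (i : Fin (N+1)) :
    Fin (N+1) → Weyl n := fun j =>
  if j.1 < i.1 then a ⟨j.1, by have := j.2; omega⟩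
  else if j.1 = i.1 then
    moyal n h (a ⟨i.1, by have := i.2; omega⟩) (a ⟨i.1+1, by have := i.2; omega⟩)
  else a ⟨j.1+1, by have := j.2; omega⟩

/-- the tuple `(a_{N+1} ⋆ a₀, a₁, …, a_N)`. -/
def rotStar (n : ℕ) (h : ℝ) {N : ℕ} (a : Fin (N+2) → Weyl n) : Fin (N+1) → Weyl n := fun j =>
  if j.1 = 0 then moyal n h (a ⟨N+1, by omega⟩) (a ⟨0, by omega⟩)
  else a ⟨j.1, by have := j.2; omega⟩

/-- The Hochschild coboundary `b` of an `(N+1)`-multilinear functional, on tuples: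
`(bφ)(a₀⊗⋯⊗a_{N+1}) = Σ_{i=0}^{N} (-1)^i φ(a₀⊗⋯⊗(aᵢ⋆aᵢ₊₁)⊗⋯) + (-1)^{N+1} φ((a_{N+1}⋆a₀)⊗a₁⊗⋯)`. -/
def hochb (n : ℕ) (h : ℝ) {N : ℕ} (φ : (Fin (N+1) → Weyl n) → ℝ)
    (a : Fin (N+2) → Weyl n) : ℝ :=
  (∑ i : Fin (N+1), (-1:ℝ)^(i.1) * φ (insStar n h a i)) + (-1:ℝ)^(N+1) * φ (rotStar n h a)

/-- Connes' coboundary `B` of an `(N+1)`-multilinear functional, on tuples: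
`(Bφ)(a₀⊗⋯⊗a_{N-1}) = Σ_{i=0}^{N-1} (-1)^{i(N-1)} φ(1⊗aᵢ⊗⋯⊗a_{N-1}⊗a₀⊗⋯⊗a_{i-1})`. -/
def connesB (n : ℕ) {N : ℕ} (φ : (Fin (N+1) → Weyl n) → ℝ) (a : Fin N → Weyl n) : ℝ :=
  ∑ l : Fin N, (-1:ℝ)^(l.1 * (N-1)) * φ (fun j => Fin.cases 1 (fun j' => a (l + j')) j)

section Aux
open MvPolynomial

lemma pderiv_comm' {σ R : Type*} [CommRing R] (i j : σ) (p : MvPolynomial σ R) :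
    pderiv i (pderiv j p) = pderiv j (pderiv i p) := by
  classical
  induction p using MvPolynomial.induction_on with
  | C a => simp
  | add p q hp hq => simp [hp, hq]
  | mul_X p s hp =>
    have h1 : ∀ t : σ, pderiv i (pderiv t (X s : MvPolynomial σ R)) = 0 := by
      intro t
      rcases eq_or_ne s t with rfl | hne
      · simp
      · simp [pderiv_X_of_ne hne]
    have h2 : ∀ t : σ, pderiv j (pderiv t (X s : MvPolynomial σ R)) = 0 := by
      intro t
      rcases eq_or_ne s t with rfl | hne
      · simp
      · simp [pderiv_X_of_ne hne]
    simp only [pderiv_mul, map_add, hp, h1, h2, mul_zero, add_zero]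
    ring

lemma pderiv_prod_zero {σ R ι : Type*} [CommRing R] [DecidableEq ι] (x : σ)
    (s : Finset ι) (f : ι → MvPolynomial σ R) (hf : ∀ i ∈ s, pderiv x (f i) = 0) :
    pderiv x (∏ i ∈ s, f i) = 0 := by
  induction s using Finset.induction_on with
  | empty => simp
  | @insert a s hns ih =>
    rw [Finset.prod_insert hns, pderiv_mul, hf _ (Finset.mem_insert_self _ _),
      ih fun i hi => hf i (Finset.mem_insert_of_mem hi)]
    simp

lemma pderiv_rename_of_ne {n N : ℕ} {i : Fin N} (v : Fin N × Fin (2*n)) (hv : v.1 ≠ i)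
    (p : Weyl n) : pderiv v (rename (fun w => (i, w)) p : JointW N n) = 0 := by
  apply pderiv_eq_zero_of_notMem_vars
  intro hmem
  have := MvPolynomial.vars_rename (fun w => (i, w)) p hmem
  simp only [Finset.mem_image] at this
  obtain ⟨w, -, hw⟩ := this
  exact hv (by rw [← hw])

lemma pderiv_tensorW {n N : ℕ} (a : Fin N → Weyl n) (j : Fin N) (c : ℝ)
    (hc : a j = C c) (v : Fin (2*n)) :
    pderiv ((j, v) : Fin N × Fin (2*n)) (tensorW a) = 0 := by
  apply pderiv_prod_zero
  intro i _
  rcases eq_or_ne i j with rfl | hne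
  · rw [hc, MvPolynomial.rename_C]
    exact pderiv_C
  · exact pderiv_rename_of_ne _ (by simpa using hne.symm) _

lemma pderiv_alphaOp {n N : ℕ} (x : Fin N × Fin (2*n)) (i' j' : Fin N) (F : JointW N n) :
    pderiv x (alphaOp n N i' j' F) = alphaOp n N i' j' (pderiv x F) := by
  simp only [alphaOp, LinearMap.sum_apply, map_sum, LinearMap.sub_apply, map_sub,
    LinearMap.comp_apply, Derivation.coeFn_coe]
  refine Finset.sum_congr rfl fun s _ => ?_
  rw [pderiv_comm' x, pderiv_comm' x, pderiv_comm' x, pderiv_comm' x]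

lemma alphaOp_eq_zero {n N : ℕ} {j : Fin N} (i' j' : Fin N) (F : JointW N n)
    (hF : ∀ v, pderiv ((j, v) : Fin N × Fin (2*n)) F = 0) (hj : i' = j ∨ j' = j) :
    alphaOp n N i' j' F = 0 := by
  simp only [alphaOp, LinearMap.sum_apply, LinearMap.sub_apply, LinearMap.comp_apply,
    Derivation.coeFn_coe]
  refine Finset.sum_eq_zero fun s _ => ?_
  rcases hj with rfl | rfl
  · rw [pderiv_comm' (i', pCoord n s) (j', qCoord n s) F,
      pderiv_comm' (i', qCoord n s) (j', pCoord n s) F, hF, hF, map_zero, map_zero, sub_zero]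
  · rw [hF, hF, map_zero, map_zero, sub_zero]

lemma foldl_zero' {n N : ℕ} {ι : Type*} (L : List ι) (f : JointW N n → ι → JointW N n)
    (hf : ∀ i, f 0 i = 0) : L.foldl f 0 = 0 := by
  induction L with
  | nil => rfl
  | cons l L ih => rw [List.foldl_cons, hf, ih]

lemma foldl_alpha_eq_zero {n N : ℕ} {ι : Type*} (L : List ι) (A B : ι → Fin N) (j : Fin N)
    (F : JointW N n) (hF : ∀ v, pderiv ((j, v) : Fin N × Fin (2*n)) F = 0)
    (hex : ∃ l ∈ L, A l = j ∨ B l = j) :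
    L.foldl (fun G l => alphaOp n N (A l) (B l) G) F = 0 := by
  induction L generalizing F with
  | nil => simp at hex
  | cons l L ih =>
    rw [List.foldl_cons]
    by_cases hl : A l = j ∨ B l = j
    · rw [alphaOp_eq_zero _ _ _ hF hl]
      exact foldl_zero' _ _ fun i => map_zero _
    · obtain ⟨l', hl', h'⟩ := hex
      rcases List.mem_cons.mp hl' with rfl | hm
      · exact absurd h' hl
      · exact ih _ (fun v => by rw [pderiv_alphaOp, hF, map_zero]) ⟨l', hm, h'⟩

lemma alphaWedge_eq_zero {n N k : ℕ} (slots : Fin (2*k) → Fin N) (h : ℝ) (j : Fin N)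
    (F : JointW N n) (hF : ∀ v, pderiv ((j, v) : Fin N × Fin (2*n)) F = 0)
    (i₀ : Fin (2*k)) (hi₀ : slots i₀ = j) :
    alphaWedge n N k slots h F = 0 := by
  unfold alphaWedge
  have hσ : ∀ σ : Equiv.Perm (Fin (2*k)),
      (List.finRange k).foldl (fun G l =>
        alphaOp n N (slots (σ ⟨2*l.1, by have := l.2; omega⟩))
          (slots (σ ⟨2*l.1+1, by have := l.2; omega⟩)) G) F = 0 := by
    intro σ
    refine foldl_alpha_eq_zero _ (fun l : Fin k => slots (σ ⟨2*l.1, by have := l.2; omega⟩))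
      (fun l : Fin k => slots (σ ⟨2*l.1+1, by have := l.2; omega⟩)) j F hF ?_
    set t := σ.symm i₀ with ht
    have ht2 : t.1 < 2*k := t.2
    refine ⟨⟨t.1/2, by omega⟩, List.mem_finRange _, ?_⟩
    have hcase : t.1 = 2*(t.1/2) ∨ t.1 = 2*(t.1/2)+1 := by omega
    have key : ∀ x : Fin (2*k), x = t → slots (σ x) = j := by
      intro x hx
      rw [hx, ht, Equiv.apply_symm_apply, hi₀]
    rcases hcase with hc | hc
    · exact Or.inl (key _ (Fin.ext hc.symm))
    · exact Or.inr (key _ (Fin.ext hc.symm))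
  simp only [hσ, smul_zero, Finset.sum_const_zero]

lemma expOp_zero {n N : ℕ} (c : ℝ) (L : Module.End ℝ (JointW N n)) :
    expOp c L (0 : JointW N n) = 0 := by
  simp [expOp]

lemma prodExpAlpha_zero {n N : ℕ} (h : ℝ) (u : Fin N → ℝ) :
    prodExpAlpha n N h u (0 : JointW N n) = 0 := by
  unfold prodExpAlpha
  refine foldl_zero' _ _ fun i => foldl_zero' _ _ fun j => ?_
  split
  · exact expOp_zero _ _
  · rfl

end Aux

/-- The cochains `τ_m` are normalized (reduced): for `1 ≤ k ≤ n`,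
`τ_{2k}(a₀⊗⋯⊗a_{2k}) = 0` whenever some `a_j` with `j ≥ 1` is a constant polynomial,
and `τ_{2k-1}(a₀⊗⋯⊗a_{2k-1}) = 0` whenever some `a_j` (any `j`) is constant. -/
theorem tau_normalized (n : ℕ) (hn : 1 ≤ n) (h : ℝ) :
    (∀ k : ℕ, 1 ≤ k → k ≤ n → ∀ a : Fin (2*k+1) → Weyl n, ∀ j : Fin (2*k+1),
      1 ≤ j.1 → (∃ c : ℝ, a j = MvPolynomial.C c) → tau n h (2*k) a = 0)
    ∧ (∀ k : ℕ, 1 ≤ k → k ≤ n → ∀ a : Fin (2*k-1+1) → Weyl n, ∀ j : Fin (2*k-1+1),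
      (∃ c : ℝ, a j = MvPolynomial.C c) → tau n h (2*k-1) a = 0) := by
  constructor
  · rintro k hk1 hk2 a j hj ⟨c, hc⟩
    have h0 : alphaWedge n (2*k+1) (2*k/2)
        (fun i : Fin (2*(2*k/2)) => (⟨i.1+1, by have := i.2; omega⟩ : Fin (2*k+1))) h
        (tensorW a) = 0 := by
      refine alphaWedge_eq_zero _ h j (tensorW a)
        (fun v => pderiv_tensorW a j c hc v) ⟨j.1 - 1, by have := j.2; omega⟩ ?_
      exact Fin.ext (by have := j.2; simp; omega)
    have hint : ∀ u : Fin (2*k) → ℝ, evalZero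
        (prodExpAlpha n (2*k+1) h (uExt u)
          (alphaWedge n (2*k+1) (2*k/2)
            (fun i => (⟨i.1+1, by have := i.2; omega⟩ : Fin (2*k+1))) h (tensorW a))) = 0 := by
      intro u
      rw [h0, prodExpAlpha_zero]
      exact map_zero _
    rw [tau, if_pos (by omega)]
    simp only [hint, MeasureTheory.integral_zero, mul_zero]
  · rintro k hk1 hk2 a j ⟨c, hc⟩
    have h0 : alphaWedge n (2*k-1+1) ((2*k-1+1)/2)
        (fun i : Fin (2*((2*k-1+1)/2)) => (⟨i.1, by have := i.2; omega⟩ : Fin (2*k-1+1))) h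
        (tensorW a) = 0 := by
      refine alphaWedge_eq_zero _ h j (tensorW a)
        (fun v => pderiv_tensorW a j c hc v) ⟨j.1, by have := j.2; omega⟩ ?_
      exact Fin.ext rfl
    have hint : ∀ u : Fin (2*k-1) → ℝ, evalZero
        (prodExpAlpha n (2*k-1+1) h (uExt u)
          (alphaWedge n (2*k-1+1) ((2*k-1+1)/2)
            (fun i => (⟨i.1, by have := i.2; omega⟩ : Fin (2*k-1+1))) h (tensorW a))) = 0 := by
      intro u
      rw [h0, prodExpAlpha_zero]
      exact map_zero _
    rw [tau, if_neg (by omega)]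
    simp only [hint, MeasureTheory.integral_zero, mul_zero]
end
end

section
/- For every idempotent e ∈ A (e² = e) and every k ≥ 0, the Chern character Ch_k(e) = (c_k, c_{k−1}, …, c₀) is closed under b + B̄ in the normalized mixed complex: b c₀ = 0 and b cᵢ + B̄ cᵢ₋₁ = 0 in C̄_{2i−1}(A) for every 1 ≤ i ≤ k. -/
noncomputable section

/-- the tuple `(a₀, …, aᵢaᵢ₊₁, …, a_N)` : merge slots `i` and `i+1`. -/
def mergeAt {A : Type*} [Mul A] {N : ℕ} (v : Fin (N+1) → A) (i : Fin N) : Fin N → A :=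
  fun j =>
    if j.1 < i.1 then v ⟨j.1, by have := j.2; omega⟩
    else if j.1 = i.1 then v ⟨i.1, by have := i.2; omega⟩ * v ⟨i.1+1, by have := i.2; omega⟩
    else v ⟨j.1+1, by have := j.2; omega⟩

/-- the tuple `(a_N a₀, a₁, …, a_{N-1})`. -/
def rotMul {A : Type*} [Mul A] {N : ℕ} (v : Fin (N+1) → A) : Fin N → A :=
  fun j =>
    if j.1 = 0 then v ⟨N, by omega⟩ * v ⟨0, by omega⟩
    else v ⟨j.1, by have := j.2; omega⟩

/-- The submodule of degenerate chains: the kernel of `A^{⊗N} → C̄_{N-1}(A) = A ⊗ (A/k·1)^{⊗(N-1)}`,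
spanned by the pure tensors having the unit `1` in some slot `j ≥ 1`. -/
def degSub (K : Type*) [CommRing K] (A : Type*) [Ring A] [Algebra K A] (N : ℕ) :
    Submodule K (PiTensorProduct K (fun _ : Fin N => A)) :=
  Submodule.span K
    {x | ∃ (v : Fin N → A) (j : Fin N), j.1 ≠ 0 ∧ v j = 1 ∧ x = PiTensorProduct.tprod K v}

/-- the tuple underlying the Chern character component `c_i`, `N = 2i+1` entries:
`((e - 1/2), e, …, e)` (just `(e)` in the degenerate case `N = 1`, where `c₀ = e`). -/
def chTuple (R : Type*) [CommRing R] [Algebra ℚ R] (A : Type*) [Ring A] [Algebra R A]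
    (e : A) (N : ℕ) : Fin N → A :=
  fun j => if j.1 = 0 ∧ 2 ≤ N then e - (algebraMap ℚ R (1/2 : ℚ)) • (1:A) else e

set_option maxHeartbeats 1000000 in
set_option maxRecDepth 10000 in
/-- For every idempotent `e` the Chern character
`Ch_k(e) = (c_k, …, c₀)`, `c₀ = e`, `cᵢ = (-1)^i ((2i)!/i!) (e - 1/2) ⊗ e^{⊗ 2i}`,
is `(b+B̄)`-closed in the normalized mixed complex: `b c₀ = 0` (the differential out of
degree `0` lands in `C̄₋₁ = 0`), and for `1 ≤ i ≤ k` the element `b cᵢ + B̄ cᵢ₋₁` of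
`A^{⊗ 2i}` is degenerate, i.e. vanishes in `C̄_{2i-1}(A)`. -/
theorem chern_character_closed (R : Type*) [CommRing R] [Algebra ℚ R]
    (A : Type*) [Ring A] [Algebra R A] (e : A) (he : e * e = e) (k : ℕ) :
    -- `b c₀ = 0` : the degree-0 differential takes values in the zero module `C̄₋₁ = 0`
    (∀ f : PiTensorProduct R (fun _ : Fin 1 => A) →ₗ[R] (⊥ : Submodule R A),
        f (PiTensorProduct.tprod R (chTuple R A e 1)) = 0)
    -- `b cᵢ + B̄ cᵢ₋₁ = 0` in `C̄_{2i-1}(A)` for `1 ≤ i ≤ k`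
    ∧ ∀ (i : ℕ) (hi : 1 ≤ i), i ≤ k →
        (((-1:R)^i * (((2*i).factorial / i.factorial : ℕ) : R)) •
            ((∑ j : Fin (2*i), (-1:R)^(j.1) •
                PiTensorProduct.tprod R (mergeAt (chTuple R A e (2*i+1)) j))
              + (-1:R)^(2*i) • PiTensorProduct.tprod R (rotMul (chTuple R A e (2*i+1)))))
        + (((-1:R)^(i-1) * (((2*(i-1)).factorial / (i-1).factorial : ℕ) : R)) •
            (∑ l : Fin (2*i-1), (-1:R)^(l.1 * (2*i-2)) •
                PiTensorProduct.tprod R (fun j : Fin (2*i) =>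
                  Fin.cases (1:A) (fun j' => chTuple R A e (2*i-1) (l + j'))
                    (Fin.cast (by omega : 2*i = 2*i-1+1) j))))
        ∈ degSub R A (2*i) := by
  constructor
  · intro f; exact Subsingleton.elim _ _
  · intro i hi _
    obtain ⟨m, rfl⟩ : ∃ m, i = m + 1 := ⟨i - 1, by omega⟩
    -- keep hi
    haveI : NeZero (2*(m+1)-1) := ⟨by omega⟩
    set c : R := algebraMap ℚ R (1/2 : ℚ) with hc
    have hc2 : c + c = 1 := by
      rw [hc, ← map_add, ← map_one (algebraMap ℚ R)]; norm_num
    have hcc : c * 2 = 1 := by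
      have h2 : (2 : R) = algebraMap ℚ R 2 := by
        rw [map_ofNat]
      rw [hc, h2, ← map_mul, ← map_one (algebraMap ℚ R)]; norm_num
    set f : A := e - c • (1 : A) with hf
    have hfe : f * e = c • e := by
      rw [hf, sub_mul, smul_mul_assoc, one_mul, he, sub_eq_iff_eq_add, ← add_smul, hc2, one_smul]
    have hef : e * f = c • e := by
      rw [hf, mul_sub, mul_smul_comm, mul_one, he, sub_eq_iff_eq_add, ← add_smul, hc2, one_smul]
    -- basic tuples
    set z0 : Fin (2*(m+1)) := ⟨0, by omega⟩ with hz0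
    set base : Fin (2*(m+1)) → A := fun _ => e with hbase
    set E : PiTensorProduct R (fun _ : Fin (2*(m+1)) => A) := PiTensorProduct.tprod R base with hE
    set Gt : Fin (2*(m+1)) → A := Function.update base z0 (1:A) with hGt
    set G : PiTensorProduct R (fun _ : Fin (2*(m+1)) => A) := PiTensorProduct.tprod R Gt with hG
    have hupd_e : Function.update base z0 e = base := Function.update_eq_self z0 base
    have hch : chTuple R A e (2*(m+1)+1) = fun p => if p.1 = 0 then f else e := by
      funext p
      simp only [chTuple, ← hc, ← hf]
      by_cases h : p.1 = 0
      · simp [h, show 2 ≤ 2*(m+1)+1 by omega]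
      · simp [h]
    -- merge computation
    have hmerge : ∀ j : Fin (2*(m+1)),
        mergeAt (chTuple R A e (2*(m+1)+1)) j
          = Function.update base z0 (if j.1 = 0 then f * e else f) := by
      intro j
      funext p
      rw [hch]
      simp only [mergeAt, Function.update, hbase, hz0]
      by_cases hp : p.1 = 0
      · by_cases hj : j.1 = 0 <;>
          simp_all [Fin.ext_iff, -Fin.val_eq_zero_iff] <;> omega
      · by_cases h1 : p.1 < j.1
        · simp_all [Fin.ext_iff, -Fin.val_eq_zero_iff]
        · by_cases h2 : p.1 = j.1
          · have hj : j.1 ≠ 0 := by omega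
            simp_all [Fin.ext_iff, he, -Fin.val_eq_zero_iff]
          · simp_all [Fin.ext_iff, -Fin.val_eq_zero_iff]
    -- tprod of the merged tuples
    have hFf : PiTensorProduct.tprod R (Function.update base z0 f) = E - c • G := by
      rw [hf, MultilinearMap.map_update_sub, MultilinearMap.map_update_smul, hupd_e, hE, hG, hGt]
    have hsmul_e : PiTensorProduct.tprod R (Function.update base z0 (c • e)) = c • E := by
      rw [MultilinearMap.map_update_smul, hupd_e, hE]
    have hterm : ∀ j : Fin (2*(m+1)),
        PiTensorProduct.tprod R (mergeAt (chTuple R A e (2*(m+1)+1)) j)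
          = if j.1 = 0 then c • E else (E - c • G) := by
      intro j
      rw [hmerge]
      by_cases hj : j.1 = 0
      · rw [if_pos hj, if_pos hj, hfe, hsmul_e]
      · rw [if_neg hj, if_neg hj, hFf]
    -- rot
    have hrot : rotMul (chTuple R A e (2*(m+1)+1)) = Function.update base z0 (e * f) := by
      funext p
      by_cases hp : p = z0
      · subst hp
        rw [Function.update_self]
        simp [rotMul, hch, hz0, (show ¬(2*(m+1)=0) by omega)]
      · rw [Function.update_of_ne hp]
        have hp0 : p.1 ≠ 0 := by simpa [Fin.ext_iff, hz0, -Fin.val_eq_zero_iff] using hp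
        simp only [rotMul, hch, if_neg hp0, hbase]
    have hrott : PiTensorProduct.tprod R (rotMul (chTuple R A e (2*(m+1)+1))) = c • E := by
      rw [hrot, hef, hsmul_e]
    -- the b-part sum
    have hbsum : (∑ j : Fin (2*(m+1)), (-1:R)^(j.1) •
          PiTensorProduct.tprod R (mergeAt (chTuple R A e (2*(m+1)+1)) j))
        = c • E - (E - c • G) := by
      have key : ∀ j : Fin (2*(m+1)), (-1:R)^(j.1) •
            PiTensorProduct.tprod R (mergeAt (chTuple R A e (2*(m+1)+1)) j)
          = (-1:R)^(j.1) • (E - c • G) + (if j = z0 then c • E - (E - c • G) else 0) := by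
        intro j
        rw [hterm]
        by_cases hj : j.1 = 0
        · have hjz : j = z0 := by simp [Fin.ext_iff, hz0, hj]
          rw [if_pos hj, if_pos hjz, hj, pow_zero, one_smul, one_smul]
          abel
        · rw [if_neg hj, if_neg (by simp [Fin.ext_iff, hz0, hj]), add_zero]
      rw [Finset.sum_congr rfl (fun j _ => key j), Finset.sum_add_distrib,
        Finset.sum_ite_eq' Finset.univ z0 (fun _ => c • E - (E - c • G)),
        if_pos (Finset.mem_univ z0), ← Finset.sum_smul,
        Fin.sum_univ_eq_sum_range (fun j => (-1:R)^j) (2*(m+1)),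
        neg_one_geom_sum, if_pos (by exact ⟨m+1, by ring⟩), zero_smul, zero_add]
    have hbpart : (∑ j : Fin (2*(m+1)), (-1:R)^(j.1) •
          PiTensorProduct.tprod R (mergeAt (chTuple R A e (2*(m+1)+1)) j))
        + (-1:R)^(2*(m+1)) • PiTensorProduct.tprod R (rotMul (chTuple R A e (2*(m+1)+1)))
        = c • G := by
      rw [hbsum, hrott, Even.neg_one_pow ⟨m+1, by ring⟩, one_smul]
      have h1 : c • E + c • E = E := by rw [← add_smul, hc2, one_smul]
      calc c • E - (E - c • G) + c • E = (c • E + c • E) - E + c • G := by abel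
        _ = c • G := by rw [h1]; abel
    -- B-part
    have hcast : 2*(m+1) = 2*(m+1)-1+1 := by omega
    set d : R := if 2 ≤ 2*(m+1)-1 then c else 0 with hd
    have hchB : ∀ q : Fin (2*(m+1)-1), chTuple R A e (2*(m+1)-1) q
        = if q.1 = 0 then e - d • (1:A) else e := by
      intro q
      simp only [chTuple, ← hc, hd]
      by_cases h1 : q.1 = 0 <;> by_cases h2 : 2 ≤ 2*(m+1)-1 <;>
        simp [h1, h2]
    set sl : Fin (2*(m+1)-1) → Fin (2*(m+1)) :=
      fun l => ⟨(-l : Fin (2*(m+1)-1)).1 + 1, by have := (-l : Fin (2*(m+1)-1)).isLt; omega⟩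
      with hsl
    have hsl0 : ∀ l, (sl l).1 ≠ 0 := by intro l; simp [hsl]
    have hslz : ∀ l, sl l ≠ z0 := by
      intro l
      simp [Fin.ext_iff, hsl, hz0, -Fin.val_eq_zero_iff]
    have hGtsl : ∀ l, Gt (sl l) = e := by
      intro l
      rw [hGt, Function.update_of_ne (hslz l), hbase]
    have hT : ∀ l : Fin (2*(m+1)-1),
        (fun j : Fin (2*(m+1)) => Fin.cases (1:A)
            (fun j' => chTuple R A e (2*(m+1)-1) (l + j')) (Fin.cast hcast j))
          = Function.update Gt (sl l) (e - d • (1:A)) := by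
      intro l
      funext j
      show Fin.cases (1:A) (fun j' => chTuple R A e (2*(m+1)-1) (l + j')) (Fin.cast hcast j)
        = Function.update Gt (sl l) (e - d • (1:A)) j
      rcases Fin.eq_zero_or_eq_succ (Fin.cast hcast j) with h | ⟨j', h⟩
      · have hj0 : j.1 = 0 := by
          have := congrArg Fin.val h
          simpa using this
        have hjz : j = z0 := by simp [Fin.ext_iff, hz0, hj0]
        rw [h, Fin.cases_zero, hjz, Function.update_of_ne (Ne.symm (hslz _)), hGt,
          Function.update_self]
      · have hjv : j.1 = j'.1 + 1 := by
          have := congrArg Fin.val h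
          simpa using this
        rw [h, Fin.cases_succ, hchB]
        by_cases hj' : l + j' = 0
        · have hjn : j' = -l := (neg_eq_of_add_eq_zero_right hj').symm
          have hjsl : j = sl l := by
            rw [Fin.ext_iff, hjv, hjn]
          rw [if_pos (by rw [hj', Fin.val_zero]), hjsl, Function.update_self]
        · have h0 : (l + j').1 ≠ 0 := by
            intro hcon
            exact hj' (Fin.ext (by rw [hcon, Fin.val_zero]))
          have hjsl : j ≠ sl l := by
            intro hcon
            apply hj'
            have hval : j.1 = (-l : Fin (2*(m+1)-1)).1 + 1 := by
              rw [hcon]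
            have : j'.1 = (-l : Fin (2*(m+1)-1)).1 := by omega
            rw [Fin.ext this, add_neg_cancel]
          rw [if_neg h0, Function.update_of_ne hjsl, hGt,
            Function.update_of_ne (by simp [Fin.ext_iff, hz0, hjv, -Fin.val_eq_zero_iff]), hbase]
    set D : Fin (2*(m+1)-1) → PiTensorProduct R (fun _ : Fin (2*(m+1)) => A) :=
      fun l => PiTensorProduct.tprod R (Function.update Gt (sl l) (1:A)) with hD
    have hBterm : ∀ l, PiTensorProduct.tprod R (Function.update Gt (sl l) (e - d • (1:A)))
        = G - d • D l := by
      intro l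
      rw [MultilinearMap.map_update_sub, MultilinearMap.map_update_smul]
      have h1 : Function.update Gt (sl l) e = Gt := by
        conv_lhs => rw [show e = Gt (sl l) from (hGtsl l).symm]
        exact Function.update_eq_self _ _
      rw [h1, hG, hD]
    have hBsum : (∑ l : Fin (2*(m+1)-1), (-1:R)^(l.1 * (2*(m+1)-2)) •
          PiTensorProduct.tprod R (fun j : Fin (2*(m+1)) =>
            Fin.cases (1:A) (fun j' => chTuple R A e (2*(m+1)-1) (l + j'))
              (Fin.cast hcast j)))
        = (2*(m+1)-1) • G - d • ∑ l, D l := by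
      have key : ∀ l : Fin (2*(m+1)-1), (-1:R)^(l.1 * (2*(m+1)-2)) •
            PiTensorProduct.tprod R (fun j : Fin (2*(m+1)) =>
              Fin.cases (1:A) (fun j' => chTuple R A e (2*(m+1)-1) (l + j'))
                (Fin.cast hcast j)) = G - d • D l := by
        intro l
        rw [hT l, hBterm l,
          Even.neg_one_pow (Even.mul_left (⟨m, by omega⟩ : Even (2*(m+1)-2)) l.1), one_smul]
      rw [Finset.sum_congr rfl (fun l _ => key l), Finset.sum_sub_distrib, Finset.sum_const,
        Finset.card_univ, Fintype.card_fin, ← Finset.smul_sum]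
    -- the numerical identity
    have hdvd : m.factorial ∣ (2*m).factorial := Nat.factorial_dvd_factorial (by omega)
    have ha : (2*m).factorial / m.factorial * m.factorial = (2*m).factorial :=
      Nat.div_mul_cancel hdvd
    have hkey : (2*(m+1)).factorial / (m+1).factorial
        = 2*(2*m+1) * ((2*m).factorial / m.factorial) := by
      rw [Nat.div_eq_iff_eq_mul_left (Nat.factorial_pos _)
        (Nat.factorial_dvd_factorial (by omega))]
      have h2m : (2*(m+1)).factorial = (2*m+2) * ((2*m+1) * (2*m).factorial) := by
        rw [show 2*(m+1) = (2*m+1) + 1 by ring, Nat.factorial_succ, Nat.factorial_succ]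
      rw [h2m, Nat.factorial_succ,
        show 2*(2*m+1) * ((2*m).factorial / m.factorial) * ((m+1)*m.factorial)
          = (2*(m+1))*(2*m+1)*((2*m).factorial / m.factorial * m.factorial) from by ring, ha]
      ring
    have hn1 : 2*(m+1)-1 = 2*m+1 := by omega
    have hzero : ((-1:R)^(m+1) * (((2*(m+1)).factorial / (m+1).factorial : ℕ) : R)) * c
        + ((-1:R)^m * (((2*m).factorial / m.factorial : ℕ) : R)) * ((2*(m+1)-1 : ℕ) : R)
        = 0 := by
      rw [hkey, hn1]
      push_cast
      linear_combination (-((-1:R)^m) * (2*(m:R)+1) *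
        (((2*m).factorial / m.factorial : ℕ) : R)) * hcc
    -- final assembly
    simp only [Nat.add_sub_cancel]
    rw [hbpart, hBsum]
    have hfinal : ∀ r s : R, r * c + s * ((2*(m+1)-1 : ℕ) : R) = 0 →
        r • (c • G) + s • ((2*(m+1)-1) • G - d • ∑ l, D l)
          = (-(s*d)) • ∑ l, D l := by
      intro r s h
      rw [smul_smul, smul_sub, ← Nat.cast_smul_eq_nsmul R (2*(m+1)-1) G, smul_smul, smul_smul]
      have h2 : (r*c) • G + (s * ((2*(m+1)-1 : ℕ) : R)) • G = 0 := by
        rw [← add_smul, h, zero_smul]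
      calc (r*c) • G + ((s * ((2*(m+1)-1 : ℕ) : R)) • G - (s*d) • ∑ l, D l)
          = ((r*c) • G + (s * ((2*(m+1)-1 : ℕ) : R)) • G) - (s*d) • ∑ l, D l := by abel
        _ = (-(s*d)) • ∑ l, D l := by rw [h2, zero_sub, neg_smul]
    rw [hfinal _ _ hzero, Finset.smul_sum]
    refine Submodule.sum_mem _ (fun l _ => Submodule.smul_mem _ _ ?_)
    exact Submodule.subset_span
      ⟨Function.update Gt (sl l) 1, sl l, hsl0 l, Function.update_self _ _ _, rfl⟩
end
end

section
/- The partition-of-unity map ρ from Čech cochains to Alexander–Spanier cochains is a chain map: for every k ≥ 0 and every c : ι^{k+1} → ℝ, ρ(δ̌ c) = δ(ρ(c)) in C^∞(M^{k+2}). -/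
open scoped Manifold

noncomputable section

/-- The Alexander–Spanier coboundary:
`(δf)(x₀,…,x_{k+1}) = Σ_{i=0}^{k+1} (-1)^i f(x₀,…,x̂ᵢ,…,x_{k+1})`. -/
def ASdelta {M : Type*} (m : ℕ) (f : (Fin (m+1) → M) → ℝ) (x : Fin (m+2) → M) : ℝ :=
  ∑ i : Fin (m+2), (-1:ℝ)^(i.1) * f (fun j => x (i.succAbove j))

/-- The Čech coboundary of a Čech cochain `c : ι^{k+1} → ℝ`. -/
def cechDelta {ι : Type*} (k : ℕ) (c : (Fin (k+1) → ι) → ℝ) (w : Fin (k+2) → ι) : ℝ :=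
  ∑ i : Fin (k+2), (-1:ℝ)^(i.1) * c (fun j => w (i.succAbove j))

/-- The partition-of-unity map `ρ` from Čech cochains to Alexander–Spanier cochains:
`ρ(c)(x₀,…,x_k) = Σ_{(u₀,…,u_k)} c(u₀,…,u_k) φ_{u₀}(x₀)⋯φ_{u_k}(x_k)` (the locally
finite sum realized as a `finsum`). -/
def rhoPU {ι M : Type*} (φ : ι → M → ℝ) (k : ℕ) (c : (Fin (k+1) → ι) → ℝ)
    (x : Fin (k+1) → M) : ℝ :=
  ∑ᶠ w : Fin (k+1) → ι, c w * ∏ i, φ (w i) (x i)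

/-- For a smooth partition of unity `(φ_u)_{u∈ι}` on a smooth manifold
`M`, the map `ρ` is a chain map from Čech cochains to Alexander–Spanier cochains:
`ρ(δ̌c) = δ(ρ(c))` for every Čech `k`-cochain `c`. -/
theorem rho_partition_of_unity_chain_map
    {E : Type*} [NormedAddCommGroup E] [NormedSpace ℝ E]
    {H : Type*} [TopologicalSpace H] (I : ModelWithCorners ℝ E H)
    (M : Type*) [TopologicalSpace M] [ChartedSpace H M] [IsManifold I (⊤ : ℕ∞) M]
    (ι : Type*) (φ : ι → M → ℝ)
    (hsmooth : ∀ u, ContMDiff I (modelWithCornersSelf ℝ ℝ) (⊤ : ℕ∞) (φ u))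
    (hlf : LocallyFinite fun u => Function.support (φ u))
    (hsum : ∀ x, ∑ᶠ u, φ u x = 1)
    (k : ℕ) (c : (Fin (k+1) → ι) → ℝ) (x : Fin (k+2) → M) :
    rhoPU φ (k+1) (cechDelta k c) x = ASdelta k (rhoPU φ k c) x := by

  classical
  have hfin : ∀ i : Fin (k+2), {u : ι | φ u (x i) ≠ 0}.Finite := fun i =>
    hlf.point_finite (x i)
  set T : Finset ι := Finset.univ.biUnion (fun i : Fin (k+2) => (hfin i).toFinset) with hTdef
  have hT : ∀ (i : Fin (k+2)) (u : ι), φ u (x i) ≠ 0 → u ∈ T := fun i u h =>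
    Finset.mem_biUnion.2 ⟨i, Finset.mem_univ _, (hfin i).mem_toFinset.2 h⟩
  have hTsum : ∀ i : Fin (k+2), ∑ u ∈ T, φ u (x i) = 1 := by
    intro i
    rw [← hsum (x i)]
    exact (finsum_eq_finset_sum_of_support_subset _ (fun u hu => hT i u hu)).symm
  set P : Finset (Fin (k+2) → ι) := Fintype.piFinset (fun _ => T) with hPdef
  set P' : Finset (Fin (k+1) → ι) := Fintype.piFinset (fun _ => T) with hP'def
  have hL : rhoPU φ (k+1) (cechDelta k c) x
      = ∑ w ∈ P, cechDelta k c w * ∏ j, φ (w j) (x j) := by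
    apply finsum_eq_finset_sum_of_support_subset
    intro w hw
    have hprod : ∏ j, φ (w j) (x j) ≠ 0 := by
      intro h
      apply hw
      simp [Function.mem_support, h]
    have := Finset.prod_ne_zero_iff.1 hprod
    exact Fintype.mem_piFinset.2 fun j => hT j _ (this j (Finset.mem_univ j))
  have hR : ∀ i : Fin (k+2), rhoPU φ k c (fun j => x (i.succAbove j))
      = ∑ v ∈ P', c v * ∏ j, φ (v j) (x (i.succAbove j)) := by
    intro i
    apply finsum_eq_finset_sum_of_support_subset
    intro v hv
    have hprod : ∏ j, φ (v j) (x (i.succAbove j)) ≠ 0 := by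
      intro h
      apply hv
      simp [Function.mem_support, h]
    have := Finset.prod_ne_zero_iff.1 hprod
    exact Fintype.mem_piFinset.2 fun j => hT _ _ (this j (Finset.mem_univ j))
  have key : ∀ i : Fin (k+2),
      ∑ w ∈ P, c (fun j => w (i.succAbove j)) * ∏ j, φ (w j) (x j)
      = ∑ v ∈ P', c v * ∏ j, φ (v j) (x (i.succAbove j)) := by
    intro i
    have hbij : ∑ w ∈ P, c (fun j => w (i.succAbove j)) * ∏ j, φ (w j) (x j)
        = ∑ p ∈ T ×ˢ P', c (fun j => (i.insertNth p.1 p.2 : Fin (k+2) → ι) (i.succAbove j))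
            * ∏ j, φ ((i.insertNth p.1 p.2 : Fin (k+2) → ι) j) (x j) := by
      refine (Finset.sum_bij' (fun (p : ι × (Fin (k+1) → ι)) _ => i.insertNth p.1 p.2)
        (fun (w : Fin (k+2) → ι) _ => (w i, fun j => w (i.succAbove j))) ?_ ?_ ?_ ?_ ?_).symm
      · intro p hp
        rcases Finset.mem_product.1 hp with ⟨h1, h2⟩
        refine Fintype.mem_piFinset.2 fun j => ?_
        rcases eq_or_ne j i with h | h
        · subst h; simpa using h1
        · obtain ⟨m, rfl⟩ := Fin.exists_succAbove_eq h
          simpa using Fintype.mem_piFinset.1 h2 m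
      · intro w hw
        refine Finset.mem_product.2 ⟨Fintype.mem_piFinset.1 hw i, ?_⟩
        exact Fintype.mem_piFinset.2 fun j => Fintype.mem_piFinset.1 hw _
      · intro p hp
        ext <;> simp
      · intro w hw
        funext j
        rcases eq_or_ne j i with h | h
        · subst h; simp
        · obtain ⟨m, rfl⟩ := Fin.exists_succAbove_eq h
          simp
      · intro p hp
        rfl
    rw [hbij, Finset.sum_product]
    have hterm : ∀ (u : ι) (v : Fin (k+1) → ι),
        c (fun j => (i.insertNth u v : Fin (k+2) → ι) (i.succAbove j)) * ∏ j, φ ((i.insertNth u v : Fin (k+2) → ι) j) (x j)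
        = φ u (x i) * (c v * ∏ j, φ (v j) (x (i.succAbove j))) := by
      intro u v
      have h1 : (fun j => (i.insertNth u v : Fin (k+2) → ι) (i.succAbove j)) = v := by
        funext j; simp
      have h2 := Fin.prod_univ_succAbove
        (fun j => φ ((i.insertNth u v : Fin (k+2) → ι) j) (x j)) i
      simp only [Fin.insertNth_apply_same] at h2
      rw [h1, h2]
      have h3 : ∀ j, (i.insertNth u v : Fin (k+2) → ι) (i.succAbove j) = v j := by intro j; simp
      simp only [h3]
      ring
    calc ∑ u ∈ T, ∑ v ∈ P', c (fun j => (i.insertNth u v : Fin (k+2) → ι) (i.succAbove j))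
            * ∏ j, φ ((i.insertNth u v : Fin (k+2) → ι) j) (x j)
        = ∑ u ∈ T, ∑ v ∈ P', φ u (x i) * (c v * ∏ j, φ (v j) (x (i.succAbove j))) := by
          refine Finset.sum_congr rfl fun u _ => Finset.sum_congr rfl fun v _ => hterm u v
      _ = ∑ u ∈ T, φ u (x i) * ∑ v ∈ P', c v * ∏ j, φ (v j) (x (i.succAbove j)) := by
          refine Finset.sum_congr rfl fun u _ => (Finset.mul_sum _ _ _).symm
      _ = (∑ u ∈ T, φ u (x i)) * ∑ v ∈ P', c v * ∏ j, φ (v j) (x (i.succAbove j)) :=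
          (Finset.sum_mul _ _ _).symm
      _ = ∑ v ∈ P', c v * ∏ j, φ (v j) (x (i.succAbove j)) := by rw [hTsum i, one_mul]
  rw [hL]
  unfold ASdelta cechDelta
  simp only [Finset.sum_mul]
  rw [Finset.sum_comm]
  refine Finset.sum_congr rfl fun i _ => ?_
  rw [hR i, ← key i, Finset.mul_sum]
  refine Finset.sum_congr rfl fun w _ => ?_
  ring
end
end
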